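/- Let c ∈ ℝ with sin(c) ≠ 0, and define F : ℝ → ℝ² by F(θ) = (cos θ, cos(θ − c)). Then the image F(ℝ) = {(cos θ, cos(θ − c)) : θ ∈ ℝ}, equipped with the subspace topology of ℝ², is homeomorphic to the unit circle {z ∈ ℂ : |z| = 1}. In particular, the delay embedding of a circular limit cycle with a generic delay is a topological circle, whose first homology group is isomorphic to ℤ. -/

import Mathlib

open Real

theorem delay_embedding_of_cycle_is_topological_circle (c : ℝ) (hc : sin c ≠ 0) :
    Nonempty
      ((Set.range (fun θ : ℝ => ((cos θ, cos (θ - c)) : ℝ × ℝ))) ≃ₜ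
        ({z : ℂ | ‖z‖ = 1})) := by
  let L : ℝ × ℝ ≃ₜ ℝ × ℝ :=
    { toFun := fun p => (p.1, p.1 * Real.cos c + p.2 * Real.sin c)
      invFun := fun p => (p.1, (p.2 - p.1 * Real.cos c) / Real.sin c)
      left_inv := by
        intro p
        simp only [Prod.mk.injEq, true_and]
        ext <;> simp [hc]
      right_inv := by
        intro p
        simp only [Prod.mk.injEq, true_and]
        ext <;> simp [hc]
      continuous_toFun := by continuity
      continuous_invFun := by continuity }
  let g : ℂ ≃ₜ ℝ × ℝ := Complex.equivRealProdCLM.toHomeomorph.trans L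
  have key : g '' {z : ℂ | ‖z‖ = 1} =
      Set.range (fun θ : ℝ => ((cos θ, cos (θ - c)) : ℝ × ℝ)) := by
    ext p
    constructor
    · rintro ⟨z, hz, rfl⟩
      have hz1 : ‖z‖ = 1 := hz
      have hz0 : z ≠ 0 := by
        intro h; rw [h] at hz1; simp at hz1
      refine ⟨Complex.arg z, ?_⟩
      have hre : Real.cos (Complex.arg z) = z.re := by
        rw [Complex.cos_arg hz0, hz1, div_one]
      have him : Real.sin (Complex.arg z) = z.im := by
        rw [Complex.sin_arg, hz1, div_one]
      simp only [g, L, Homeomorph.trans_apply, ContinuousLinearEquiv.coe_toHomeomorph,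
        Complex.equivRealProdCLM_apply, Homeomorph.homeomorph_mk_coe, Equiv.coe_fn_mk]
      rw [Real.cos_sub, hre, him]
    · rintro ⟨θ, rfl⟩
      refine ⟨⟨Real.cos θ, Real.sin θ⟩, ?_, ?_⟩
      · show ‖(_ : ℂ)‖ = 1
        have : ‖(⟨Real.cos θ, Real.sin θ⟩ : ℂ)‖ = Real.sqrt (cos θ ^ 2 + sin θ ^ 2) := by
          rw [Complex.norm_def, Complex.normSq_mk]
          ring_nf
        rw [this, Real.cos_sq_add_sin_sq, Real.sqrt_one]
      · simp only [g, L, Homeomorph.trans_apply, ContinuousLinearEquiv.coe_toHomeomorph,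
          Complex.equivRealProdCLM_apply, Homeomorph.homeomorph_mk_coe, Equiv.coe_fn_mk]
        rw [Real.cos_sub]
  exact ⟨((Homeomorph.image g _).trans (Homeomorph.setCongr key)).symm⟩
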